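/- Let m | n be positive integers with mn odd and mn > 25, and let 1 ≤ d ≤ 4. Then there is no elliptic curve E over F_{2^d} such that E(F_{2^d}) contains a subgroup isomorphic to Z/mZ × Z/nZ. -/

import Mathlib

open WeierstrassCurve

section Aux

open Finset Polynomial

variable {F : Type*} [Field F] [Fintype F]

private lemma aux_filter_card {α : Type*} [Fintype α] (p : α → Prop) [DecidablePred p] :
    (Finset.univ.filter p).card = Nat.card {x // p x} := by
  rw [Nat.card_eq_fintype_card]; exact (Fintype.card_subtype p).symm

private lemma aux_two_elt {G : Type*} [AddGroup G] (h : Nat.card G = 2) {a b : G}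
    (ha : a ≠ 0) (hb : b ≠ 0) : a = b := by
  obtain ⟨y0, -, hy0⟩ := (Nat.card_eq_two_iff' (0 : G)).mp h
  rw [hy0 a ha, hy0 b hb]

/-- two roots of the Artin-Schreier-like quadratic -/
private lemma aux_root_pair (h2 : (2 : F) = 0) {c r y0 : F} (hy0 : y0 ^ 2 + c * y0 = r)
    (y : F) (hy : y ^ 2 + c * y = r) : y = y0 ∨ y = y0 + c := by
  have key : (y - y0) * (y - (y0 + c)) = 0 := by
    linear_combination hy - hy0 + (y0 ^ 2 + c * y0 - y0 * y - c * y) * h2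
  rcases mul_eq_zero.mp key with h | h
  · exact Or.inl (sub_eq_zero.mp h)
  · exact Or.inr (sub_eq_zero.mp h)

private lemma aux_fiber_le (h2 : (2 : F) = 0) (c r : F) :
    Nat.card {y : F // y ^ 2 + c * y = r} ≤ 2 := by
  classical
  by_cases hr : ∃ y : F, y ^ 2 + c * y = r
  · obtain ⟨y0, hy0⟩ := hr
    have hsub : {y : F | y ^ 2 + c * y = r} ⊆ {y0, y0 + c} := by
      intro y hy; exact aux_root_pair h2 hy0 y hy
    calc Nat.card {y : F // y ^ 2 + c * y = r}
        = Set.ncard {y : F | y ^ 2 + c * y = r} := Nat.card_coe_set_eq _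
      _ ≤ Set.ncard ({y0, y0 + c} : Set F) := Set.ncard_le_ncard hsub (Set.toFinite _)
      _ ≤ 2 := by
          refine le_trans (Set.ncard_insert_le _ _) ?_
          simp [Set.ncard_singleton]
  · have : {y : F | y ^ 2 + c * y = r} = ∅ := by
      ext y; simp only [Set.mem_setOf_eq, Set.mem_empty_iff_false, iff_false]
      exact fun h => hr ⟨y, h⟩
    calc Nat.card {y : F // y ^ 2 + c * y = r}
        = Set.ncard {y : F | y ^ 2 + c * y = r} := Nat.card_coe_set_eq _
      _ = 0 := by rw [this]; simp
      _ ≤ 2 := by norm_num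

private lemma aux_fiber_eq (h2 : (2 : F) = 0) {c : F} (hc : c ≠ 0) {r : F}
    (hr : ∃ y : F, y ^ 2 + c * y = r) :
    Nat.card {y : F // y ^ 2 + c * y = r} = 2 := by
  classical
  obtain ⟨y0, hy0⟩ := hr
  have hset : {y : F | y ^ 2 + c * y = r} = {y0, y0 + c} := by
    ext y
    simp only [Set.mem_setOf_eq, Set.mem_insert_iff, Set.mem_singleton_iff]
    constructor
    · exact aux_root_pair h2 hy0 y
    · rintro (rfl | rfl)
      · exact hy0
      · linear_combination hy0 + (y0 * c + c ^ 2) * h2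
  calc Nat.card {y : F // y ^ 2 + c * y = r}
      = Set.ncard {y : F | y ^ 2 + c * y = r} := Nat.card_coe_set_eq _
    _ = 2 := by rw [hset]; exact Set.ncard_pair (by intro h; exact hc (left_eq_add.mp h))

private lemma aux_fiber_zero {c r : F} (hr : ¬ ∃ y : F, y ^ 2 + c * y = r) :
    Nat.card {y : F // y ^ 2 + c * y = r} = 0 := by
  have : IsEmpty {y : F // y ^ 2 + c * y = r} := ⟨fun ⟨y, hy⟩ => hr ⟨y, hy⟩⟩
  simp

/-- total count of affine points expressed as sum over x of fiber counts -/
private lemma aux_count_sum (a1 a2 a3 a4 a6 : F) :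
    Nat.card {p : F × F // p.2 ^ 2 + a1 * p.1 * p.2 + a3 * p.2
        = p.1 ^ 3 + a2 * p.1 ^ 2 + a4 * p.1 + a6}
      = ∑ x : F, Nat.card {y : F // y ^ 2 + (a1 * x + a3) * y
        = x ^ 3 + a2 * x ^ 2 + a4 * x + a6} := by
  classical
  have he : ∀ x y : F, (y ^ 2 + a1 * x * y + a3 * y = x ^ 3 + a2 * x ^ 2 + a4 * x + a6)
      ↔ (y ^ 2 + (a1 * x + a3) * y = x ^ 3 + a2 * x ^ 2 + a4 * x + a6) := by
    intro x y; constructor <;> intro h <;> linear_combination h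
  have := Nat.card_congr
    (Equiv.subtypeProdEquivSigmaSubtype
      (fun (x y : F) => y ^ 2 + a1 * x * y + a3 * y = x ^ 3 + a2 * x ^ 2 + a4 * x + a6))
  rw [this, Nat.card_eq_fintype_card, Fintype.card_sigma]
  refine Finset.sum_congr rfl fun x _ => ?_
  rw [Nat.card_eq_fintype_card]
  exact Fintype.card_congr (Equiv.subtypeEquivRight (fun y => he x y))

/-- general bound: at most 2q affine points -/
private lemma aux_L1 (h2 : (2 : F) = 0) (a1 a2 a3 a4 a6 : F) :
    Nat.card {p : F × F // p.2 ^ 2 + a1 * p.1 * p.2 + a3 * p.2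
        = p.1 ^ 3 + a2 * p.1 ^ 2 + a4 * p.1 + a6} ≤ 2 * Fintype.card F := by
  rw [aux_count_sum]
  calc ∑ x : F, Nat.card {y : F // y ^ 2 + (a1 * x + a3) * y
        = x ^ 3 + a2 * x ^ 2 + a4 * x + a6}
      ≤ ∑ _x : F, 2 := Finset.sum_le_sum (fun x _ => aux_fiber_le h2 _ _)
    _ = 2 * Fintype.card F := by rw [Finset.sum_const, Finset.card_univ]; ring

set_option maxHeartbeats 1000000 in
private lemma aux_L2 (h2 : (2 : F) = 0) (h16 : Fintype.card F = 16) (a2 a3 a4 a6 : F)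
    (h3 : a3 ≠ 0) :
    Nat.card {p : F × F // p.2 ^ 2 + 0 * p.1 * p.2 + a3 * p.2
        = p.1 ^ 3 + a2 * p.1 ^ 2 + a4 * p.1 + a6} ≤ 24 := by
  classical
  set φ : F →+ F := AddMonoidHom.mk' (fun y => y ^ 2 + a3 * y)
    (fun x y => by linear_combination (x * y) * h2) with hφ
  set T : AddSubgroup F := φ.range with hT
  have hmemT : ∀ r : F, r ∈ T ↔ ∃ y : F, y ^ 2 + a3 * y = r := fun r => Iff.rfl
  have hNF : Nat.card F = 16 := by rw [Nat.card_eq_fintype_card, h16]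
  have hker : Nat.card φ.ker = 2 := by
    have hset : (φ.ker : Set F) = {0, a3} := by
      ext y
      simp only [SetLike.mem_coe, AddMonoidHom.mem_ker, Set.mem_insert_iff,
        Set.mem_singleton_iff]
      constructor
      · intro hy
        have hy' : y ^ 2 + a3 * y = 0 := hy
        have : y * (y + a3) = 0 := by linear_combination hy'
        rcases mul_eq_zero.mp this with h | h
        · exact Or.inl h
        · right; linear_combination h - a3 * h2
      · rintro (rfl | rfl)
        · show (0 : F) ^ 2 + a3 * 0 = 0; ring
        · show y ^ 2 + y * y = 0; linear_combination (y ^ 2) * h2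
    have hcoe : Nat.card φ.ker = ({0, a3} : Set F).ncard := by
      rw [← hset]; exact Nat.card_coe_set_eq _
    rw [hcoe, Set.ncard_pair (Ne.symm h3)]
  have hcards : Nat.card F = Nat.card (F ⧸ φ.ker) * Nat.card φ.ker :=
    AddSubgroup.card_eq_card_quotient_mul_card_addSubgroup _
  have hquotker : Nat.card (F ⧸ φ.ker) = Nat.card T :=
    Nat.card_congr (QuotientAddGroup.quotientKerEquivRange φ).toEquiv
  have hcardT : Nat.card T = 8 := by
    rw [hNF, hquotker, hker] at hcards; omega
  have hquotT : Nat.card (F ⧸ T) = 2 := by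
    have h' := AddSubgroup.card_eq_card_quotient_mul_card_addSubgroup T
    rw [hNF, hcardT] at h'; omega
  set ν : F → ℤ := fun c => if c ∈ T then 1 else -1 with hν
  have hν1 : ∀ c, c ∈ T → ν c = 1 := fun c hc => if_pos hc
  have hνm : ∀ c, c ∉ T → ν c = -1 := fun c hc => if_neg hc
  have hνle : ∀ c, ν c ≤ 1 := by
    intro c; by_cases h : c ∈ T
    · rw [hν1 c h]
    · rw [hνm c h]; norm_num
  have hνmul : ∀ a b : F, ν (a + b) = ν a * ν b := by
    intro a b
    by_cases ha : a ∈ T <;> by_cases hb : b ∈ T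
    · rw [hν1 _ (T.add_mem ha hb), hν1 _ ha, hν1 _ hb]; ring
    · have hab : a + b ∉ T := fun h => hb (by
        have := T.sub_mem h ha; rwa [add_sub_cancel_left] at this)
      rw [hνm _ hab, hν1 _ ha, hνm _ hb]; ring
    · have hab : a + b ∉ T := fun h => ha (by
        have := T.sub_mem h hb; rwa [add_sub_cancel_right] at this)
      rw [hνm _ hab, hνm _ ha, hν1 _ hb]; ring
    · have hqa : ((a : F ⧸ T)) ≠ 0 := by
        simpa [QuotientAddGroup.eq_zero_iff] using ha
      have hqb : ((b : F ⧸ T)) ≠ 0 := by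
        simpa [QuotientAddGroup.eq_zero_iff] using hb
      have heq : ((a : F ⧸ T)) = b := aux_two_elt hquotT hqa hqb
      have hbb : b + b = 0 := by linear_combination b * h2
      have key : ((a + b : F) : F ⧸ T) = 0 := by
        calc ((a + b : F) : F ⧸ T) = (a : F ⧸ T) + (b : F ⧸ T) := rfl
          _ = (b : F ⧸ T) + (b : F ⧸ T) := by rw [heq]
          _ = ((b + b : F) : F ⧸ T) := rfl
          _ = ((0 : F) : F ⧸ T) := by rw [hbb]
          _ = 0 := rfl
      have hab : a + b ∈ T := (QuotientAddGroup.eq_zero_iff _).mp key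
      rw [hν1 _ hab, hνm _ ha, hνm _ hb]; ring
  -- the count
  set N : ℕ := (Finset.univ.filter
    fun x : F => (x ^ 3 + a2 * x ^ 2 + a4 * x + a6) ∈ T).card with hNdef
  have hcount : Nat.card {p : F × F // p.2 ^ 2 + 0 * p.1 * p.2 + a3 * p.2
      = p.1 ^ 3 + a2 * p.1 ^ 2 + a4 * p.1 + a6} = 2 * N := by
    rw [aux_count_sum]
    have hfib : ∀ x : F, Nat.card {y : F // y ^ 2 + (0 * x + a3) * y
        = x ^ 3 + a2 * x ^ 2 + a4 * x + a6}
        = if (x ^ 3 + a2 * x ^ 2 + a4 * x + a6) ∈ T then 2 else 0 := by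
      intro x
      have hc : (0 * x + a3 : F) = a3 := by ring
      rw [hc]
      by_cases hx : (x ^ 3 + a2 * x ^ 2 + a4 * x + a6) ∈ T
      · rw [if_pos hx]; exact aux_fiber_eq h2 h3 ((hmemT _).mp hx)
      · rw [if_neg hx]
        exact aux_fiber_zero (fun ⟨y, hy⟩ => hx ((hmemT _).mpr ⟨y, hy⟩))
    rw [Finset.sum_congr rfl (fun x _ => hfib x), Finset.sum_ite, Finset.sum_const,
      Finset.sum_const, hNdef]
    simp [mul_comm]
  set S : ℤ := ∑ x : F, ν (x ^ 3 + a2 * x ^ 2 + a4 * x + a6) with hS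
  have hsplit : (Finset.univ.filter
      fun x : F => (x ^ 3 + a2 * x ^ 2 + a4 * x + a6) ∈ T).card
      + (Finset.univ.filter
      fun x : F => ¬ (x ^ 3 + a2 * x ^ 2 + a4 * x + a6) ∈ T).card = 16 := by
    rw [Finset.card_filter_add_card_filter_not, Finset.card_univ, h16]
  have hSN : S = 2 * (N : ℤ) - 16 := by
    have : S = ∑ x : F, (if (x ^ 3 + a2 * x ^ 2 + a4 * x + a6) ∈ T then (1 : ℤ) else -1) :=
      rfl
    rw [this, Finset.sum_ite, Finset.sum_const, Finset.sum_const, ← hNdef]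
    have h16' : (Finset.univ.filter
        fun x : F => ¬ (x ^ 3 + a2 * x ^ 2 + a4 * x + a6) ∈ T).card = 16 - N := by omega
    rw [h16']
    simp only [nsmul_eq_mul, mul_one, mul_neg]
    push_cast
    omega
  -- the inner character sums
  have hIin : ∀ u : F, (∀ x : F, u * x ^ 2 + u ^ 2 * x ∈ T)
      → ∑ x : F, ν (u * x ^ 2 + u ^ 2 * x) = 16 := by
    intro u hu
    calc ∑ x : F, ν (u * x ^ 2 + u ^ 2 * x) = ∑ _x : F, (1 : ℤ) :=
          Finset.sum_congr rfl fun x _ => hν1 _ (hu x)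
      _ = 16 := by simp [h16]
  have hIout : ∀ u : F, (¬ ∀ x : F, u * x ^ 2 + u ^ 2 * x ∈ T)
      → ∑ x : F, ν (u * x ^ 2 + u ^ 2 * x) = 0 := by
    intro u hu
    push_neg at hu; obtain ⟨x0, hx0⟩ := hu
    have hLadd : ∀ x y : F, ν (u * (x + y) ^ 2 + u ^ 2 * (x + y))
        = ν (u * x ^ 2 + u ^ 2 * x) * ν (u * y ^ 2 + u ^ 2 * y) := by
      intro x y
      have hid : u * (x + y) ^ 2 + u ^ 2 * (x + y)
          = (u * x ^ 2 + u ^ 2 * x) + (u * y ^ 2 + u ^ 2 * y) := by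
        linear_combination (u * x * y) * h2
      rw [hid, hνmul]
    have hrefl : ∑ x : F, ν (u * x ^ 2 + u ^ 2 * x)
        = ∑ x : F, ν (u * (x0 + x) ^ 2 + u ^ 2 * (x0 + x)) :=
      (Fintype.sum_equiv (Equiv.addLeft x0) _ _ fun x => rfl).symm
    have hneg : ∑ x : F, ν (u * (x0 + x) ^ 2 + u ^ 2 * (x0 + x))
        = (-1) * ∑ x : F, ν (u * x ^ 2 + u ^ 2 * x) := by
      rw [Finset.mul_sum]
      refine Finset.sum_congr rfl fun x _ => ?_
      rw [hLadd x0 x, hνm _ hx0]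
    have := hrefl.trans hneg
    linarith
  -- U has at most 4 elements
  set Ufin : Finset F := Finset.univ.filter
    (fun u : F => ∀ x : F, u * x ^ 2 + u ^ 2 * x ∈ T) with hUdef
  have hUcard : Ufin.card ≤ 4 := by
    by_cases hex : ∃ v ∈ Ufin, v ≠ 0
    · obtain ⟨v, hvU, hv0⟩ := hex
      have hvT : ∀ x : F, v * x ^ 2 + v ^ 2 * x ∈ T := by
        have := Finset.mem_filter.mp hvU; exact this.2
      have key : ∀ u : F, (∀ x : F, u * x ^ 2 + u ^ 2 * x ∈ T) → u ≠ 0 → u ^ 3 = v ^ 3 := by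
        intro u hu hu0
        have hfrob : Function.Surjective (fun t : F => t ^ 2) := by
          apply Finite.surjective_of_injective
          intro s t hst
          simp only at hst
          have h0 : (s - t) ^ 2 = 0 := by
            linear_combination hst + (t ^ 2 - s * t) * h2
          exact sub_eq_zero.mp (pow_eq_zero_iff (by norm_num) |>.mp h0)
        obtain ⟨t, ht⟩ := hfrob (v * u⁻¹)
        simp only at ht
        have hut : u * t ^ 2 = v := by
          rw [ht]; field_simp
        have h1 : ∀ x : F, v * x ^ 2 + u ^ 2 * t * x ∈ T := by
          intro x
          have hmem := hu (t * x)
          have heq : u * (t * x) ^ 2 + u ^ 2 * (t * x) = v * x ^ 2 + u ^ 2 * t * x := by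
            rw [← hut]; ring
          rwa [heq] at hmem
        have h2' : ∀ x : F, (u ^ 2 * t - v ^ 2) * x ∈ T := by
          intro x
          have hmem := T.sub_mem (h1 x) (hvT x)
          have heq : (v * x ^ 2 + u ^ 2 * t * x) - (v * x ^ 2 + v ^ 2 * x)
              = (u ^ 2 * t - v ^ 2) * x := by ring
          rwa [heq] at hmem
        have hcoef : u ^ 2 * t = v ^ 2 := by
          by_contra hne
          have hne' : u ^ 2 * t - v ^ 2 ≠ 0 := sub_ne_zero.mpr hne
          have hall : T = ⊤ := by
            rw [AddSubgroup.eq_top_iff']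
            intro w
            have hmem := h2' ((u ^ 2 * t - v ^ 2)⁻¹ * w)
            have heq : (u ^ 2 * t - v ^ 2) * ((u ^ 2 * t - v ^ 2)⁻¹ * w) = w := by
              field_simp
            rwa [heq] at hmem
          have hct : Nat.card T = 16 := by
            rw [hall]
            have : Nat.card (⊤ : AddSubgroup F) = Nat.card F :=
              Nat.card_congr AddSubgroup.topEquiv.toEquiv
            rw [this, hNF]
          omega
        have hfin : u ^ 3 * v = v ^ 3 * v := by
          calc u ^ 3 * v = (u ^ 2 * t) ^ 2 := by rw [← hut]; ring
            _ = (v ^ 2) ^ 2 := by rw [hcoef]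
            _ = v ^ 3 * v := by ring
        exact mul_right_cancel₀ hv0 hfin
      have hsub : Ufin ⊆ insert (0 : F)
          (Polynomial.X ^ 3 - Polynomial.C (v ^ 3)).roots.toFinset := by
        intro u hu
        have huT : ∀ x : F, u * x ^ 2 + u ^ 2 * x ∈ T := (Finset.mem_filter.mp hu).2
        by_cases hu0 : u = 0
        · simp [hu0]
        · refine Finset.mem_insert_of_mem ?_
          rw [Multiset.mem_toFinset,
            Polynomial.mem_roots (Polynomial.X_pow_sub_C_ne_zero (by norm_num) _)]
          simp [Polynomial.IsRoot, key u huT hu0]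
      have hroots : Multiset.card (Polynomial.X ^ 3 - Polynomial.C (v ^ 3)).roots ≤ 3 := by
        have h' := Polynomial.card_roots' (Polynomial.X ^ 3 - Polynomial.C (v ^ 3))
        rwa [Polynomial.natDegree_X_pow_sub_C] at h'
      calc Ufin.card ≤ _ := Finset.card_le_card hsub
        _ ≤ (Polynomial.X ^ 3 - Polynomial.C (v ^ 3)).roots.toFinset.card + 1 :=
            Finset.card_insert_le _ _
        _ ≤ 3 + 1 := by
            have := (Polynomial.X ^ 3 - Polynomial.C (v ^ 3)).roots.toFinset_card_le
            omega
        _ = 4 := rfl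
    · push_neg at hex
      have hsub : Ufin ⊆ {0} := fun u hu => Finset.mem_singleton.mpr (hex u hu)
      have := Finset.card_le_card hsub
      simp only [Finset.card_singleton] at this
      omega
  -- main computation : S^2 ≤ 64
  have hkey : S ^ 2 ≤ 64 := by
    have e1 : S ^ 2 = ∑ x : F, ∑ y : F, ν (x ^ 3 + a2 * x ^ 2 + a4 * x + a6)
        * ν (y ^ 3 + a2 * y ^ 2 + a4 * y + a6) := by
      rw [sq, hS, Finset.sum_mul_sum]
    have e2 : S ^ 2 = ∑ u : F, ν (u ^ 3 + a2 * u ^ 2 + a4 * u)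
        * ∑ x : F, ν (u * x ^ 2 + u ^ 2 * x) := by
      rw [e1]
      have einner : ∀ x : F, ∑ y : F, ν (x ^ 3 + a2 * x ^ 2 + a4 * x + a6)
          * ν (y ^ 3 + a2 * y ^ 2 + a4 * y + a6)
          = ∑ u : F, ν (u ^ 3 + a2 * u ^ 2 + a4 * u) * ν (u * x ^ 2 + u ^ 2 * x) := by
        intro x
        have step1 : ∀ y : F, ν (x ^ 3 + a2 * x ^ 2 + a4 * x + a6)
            * ν (y ^ 3 + a2 * y ^ 2 + a4 * y + a6)
            = ν ((x ^ 3 + a2 * x ^ 2 + a4 * x + a6) + (y ^ 3 + a2 * y ^ 2 + a4 * y + a6)) :=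
          fun y => (hνmul _ _).symm
        rw [Finset.sum_congr rfl fun y _ => step1 y]
        have step2 : ∑ y : F, ν ((x ^ 3 + a2 * x ^ 2 + a4 * x + a6)
            + (y ^ 3 + a2 * y ^ 2 + a4 * y + a6))
            = ∑ u : F, ν ((x ^ 3 + a2 * x ^ 2 + a4 * x + a6)
            + ((x + u) ^ 3 + a2 * (x + u) ^ 2 + a4 * (x + u) + a6)) :=
          (Fintype.sum_equiv (Equiv.addLeft x) _ _ fun u => rfl).symm
        rw [step2]
        refine Finset.sum_congr rfl fun u _ => ?_
        have hid : (x ^ 3 + a2 * x ^ 2 + a4 * x + a6)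
            + ((x + u) ^ 3 + a2 * (x + u) ^ 2 + a4 * (x + u) + a6)
            = (u ^ 3 + a2 * u ^ 2 + a4 * u) + (u * x ^ 2 + u ^ 2 * x) := by
          linear_combination (x ^ 3 + x ^ 2 * u + x * u ^ 2 + a2 * x ^ 2
            + a2 * x * u + a4 * x + a6) * h2
        rw [hid, hνmul]
      rw [Finset.sum_congr rfl fun x _ => einner x, Finset.sum_comm]
      exact Finset.sum_congr rfl fun u _ => (Finset.mul_sum _ _ _).symm
    have e3 : S ^ 2 = ∑ u ∈ Ufin, ν (u ^ 3 + a2 * u ^ 2 + a4 * u) * 16 := by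
      rw [e2]
      rw [← Finset.sum_subset (Finset.subset_univ Ufin) (fun u _ hu => by
        have : ¬ ∀ x : F, u * x ^ 2 + u ^ 2 * x ∈ T := by
          intro hall; exact hu (Finset.mem_filter.mpr ⟨Finset.mem_univ u, hall⟩)
        rw [hIout u this, mul_zero])]
      refine Finset.sum_congr rfl fun u hu => ?_
      rw [hIin u (Finset.mem_filter.mp hu).2]
    calc S ^ 2 = ∑ u ∈ Ufin, ν (u ^ 3 + a2 * u ^ 2 + a4 * u) * 16 := e3
      _ ≤ ∑ _u ∈ Ufin, 16 := Finset.sum_le_sum fun u _ => by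
          have := hνle (u ^ 3 + a2 * u ^ 2 + a4 * u)
          nlinarith
      _ = (Ufin.card : ℤ) * 16 := by rw [Finset.sum_const]; push_cast; ring
      _ ≤ 64 := by
          have : (Ufin.card : ℤ) ≤ 4 := by exact_mod_cast hUcard
          nlinarith
  -- conclude
  have hk2 : (2 * (N : ℤ) - 16) ^ 2 ≤ 64 := by rw [← hSN]; exact hkey
  have hSile : 2 * (N : ℤ) - 16 ≤ 8 := by nlinarith [hk2, sq_nonneg (2 * (N : ℤ) - 16 - 8)]
  have hNle : N ≤ 12 := by omega
  rw [hcount]; omega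

private lemma aux_frob_surj {F : Type*} [Field F] [Fintype F] (h2 : (2 : F) = 0) :
    Function.Surjective (fun t : F => t ^ 2) := by
  apply Finite.surjective_of_injective
  intro s t hst
  simp only at hst
  have h0 : (s - t) ^ 2 = 0 := by
    linear_combination hst + (t ^ 2 - s * t) * h2
  exact sub_eq_zero.mp (pow_eq_zero_iff (by norm_num) |>.mp h0)

private lemma aux_card_point {F : Type*} [Field F] [Fintype F] (W : WeierstrassCurve.Affine F)
    [W.IsElliptic] :
    Nat.card W.Point = Nat.card {p : F × F // W.Equation p.1 p.2} + 1 := by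
  classical
  have hΔ : W.Δ ≠ 0 := W.isUnit_Δ.ne_zero
  let e : W.Point ≃ Option {p : F × F // W.Equation p.1 p.2} :=
    { toFun := fun P => match P with
        | .zero => none
        | @WeierstrassCurve.Affine.Point.some _ _ _ x y h => some ⟨(x, y), h.1⟩
      invFun := fun o => match o with
        | none => .zero
        | some ⟨(x, y), hE⟩ => .some _ _ ((W.equation_iff_nonsingular_of_Δ_ne_zero hΔ).mp hE)
      left_inv := fun P => by cases P <;> rfl
      right_inv := fun o => by rcases o with - | ⟨⟨x, y⟩, hE⟩ <;> rfl }
  rw [Nat.card_congr e]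
  have : Fintype {p : F × F // W.Equation p.1 p.2} := Fintype.ofFinite _
  simp [Nat.card_eq_fintype_card]

private lemma aux_order_two {F : Type*} [Field F] [Fintype F] (h2 : (2 : F) = 0)
    (W : WeierstrassCurve.Affine F) [W.IsElliptic] (ha1 : W.a₁ ≠ 0) :
    2 ∣ Nat.card W.Point := by
  classical
  have hΔ : W.Δ ≠ 0 := W.isUnit_Δ.ne_zero
  set x0 : F := W.a₃ / W.a₁ with hx0
  have ha3 : W.a₁ * x0 = W.a₃ := mul_div_cancel₀ _ ha1
  obtain ⟨y0, hy0⟩ := aux_frob_surj h2 (x0 ^ 3 + W.a₂ * x0 ^ 2 + W.a₄ * x0 + W.a₆)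
  simp only at hy0
  have hE : W.Equation x0 y0 := by
    rw [WeierstrassCurve.Affine.equation_iff]
    linear_combination hy0 + y0 * ha3 + (W.a₃ * y0) * h2
  have hNS := (W.equation_iff_nonsingular_of_Δ_ne_zero hΔ).mp hE
  set P : W.Point := .some _ _ hNS with hP
  have hPne : P ≠ 0 := by
    intro h
    exact WeierstrassCurve.Affine.Point.some_ne_zero hNS h
  have hnegY : W.negY x0 y0 = y0 := by
    simp only [WeierstrassCurve.Affine.negY]
    linear_combination (-y0 - W.a₃) * h2 - ha3
  have hneg : -P = P := by
    rw [hP, WeierstrassCurve.Affine.Point.neg_some]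
    have hgen : ∀ y' (hy' : W.Nonsingular x0 y'), y' = y0 →
        WeierstrassCurve.Affine.Point.some _ _ hy' = WeierstrassCurve.Affine.Point.some _ _ hNS := by
      rintro y' hy' rfl; rfl
    exact hgen _ _ hnegY
  have hPP : P + P = 0 := neg_eq_iff_add_eq_zero.mp hneg
  have hord : addOrderOf P = 2 := addOrderOf_eq_prime (by rw [two_nsmul]; exact hPP) hPne
  rw [← hord]
  exact addOrderOf_dvd_natCard P

end Aux

open Classical in
/-- Let `m ∣ n` with `m * n` odd and `m * n > 25`, and `1 ≤ d ≤ 4`. Then no elliptic curve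
over the field with `2 ^ d` elements has a subgroup of rational points isomorphic to
`ZMod m × ZMod n`. -/
theorem stmt_5 {F : Type*} [Field F] [Fintype F] (m n d : ℕ) (hm : 0 < m)
    (hmn : m ∣ n) (hodd : Odd (m * n)) (hbig : 25 < m * n)
    (hd1 : 1 ≤ d) (hd4 : d ≤ 4) (hcard : Fintype.card F = 2 ^ d)
    (W : WeierstrassCurve.Affine F) [W.IsElliptic] :
    ¬ ∃ f : (ZMod m × ZMod n) →+ W.Point, Function.Injective f := by
  rintro ⟨f, hf⟩
  classical
  have hd0 : d ≠ 0 := by omega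
  have h2 : (2 : F) = 0 := by
    have hc : ((2 ^ d : ℕ) : F) = 0 := by rw [← hcard]; exact FiniteField.cast_card_eq_zero F
    push_cast at hc
    exact pow_eq_zero_iff hd0 |>.mp hc
  have hEq := aux_card_point W
  have hfin : Finite W.Point := Nat.finite_of_card_ne_zero (by omega)
  have hdvd : m * n ∣ Nat.card W.Point := by
    have h' := AddSubgroup.card_dvd_of_injective f hf
    rwa [Nat.card_prod, Nat.card_zmod, Nat.card_zmod] at h'
  have hmn27 : 27 ≤ m * n := by obtain ⟨k, hk⟩ := hodd; omega
  have hge : 27 ≤ Nat.card W.Point := le_trans hmn27 (Nat.le_of_dvd (by omega) hdvd)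
  have hcard_le : Nat.card {p : F × F // W.Equation p.1 p.2} ≤ 2 * Fintype.card F := by
    have hL1 := aux_L1 h2 W.a₁ W.a₂ W.a₃ W.a₄ W.a₆
    have hcongr : Nat.card {p : F × F // W.Equation p.1 p.2}
        = Nat.card {p : F × F // p.2 ^ 2 + W.a₁ * p.1 * p.2 + W.a₃ * p.2
          = p.1 ^ 3 + W.a₂ * p.1 ^ 2 + W.a₄ * p.1 + W.a₆} :=
      Nat.card_congr (Equiv.subtypeEquivRight (fun p => W.equation_iff p.1 p.2))
    rw [hcongr]
    exact hL1
  by_cases hd3 : d ≤ 3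
  · have h8 : Fintype.card F ≤ 8 := by
      rw [hcard]
      calc (2 : ℕ) ^ d ≤ 2 ^ 3 := Nat.pow_le_pow_right (by norm_num) hd3
        _ = 8 := rfl
    omega
  · have hd4' : d = 4 := by omega
    have h16 : Fintype.card F = 16 := by rw [hcard, hd4']; norm_num
    by_cases ha1 : W.a₁ = 0
    · have ha3 : W.a₃ ≠ 0 := by
        intro h3
        apply W.isUnit_Δ.ne_zero
        rw [WeierstrassCurve.Δ, WeierstrassCurve.b₂, WeierstrassCurve.b₄, WeierstrassCurve.b₆,
          WeierstrassCurve.b₈, ha1, h3]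
        linear_combination (-32 * W.a₂ ^ 3 * W.a₆ + 8 * W.a₂ ^ 2 * W.a₄ ^ 2 - 32 * W.a₄ ^ 3
          - 216 * W.a₆ ^ 2 + 144 * W.a₂ * W.a₄ * W.a₆) * h2
      have hle24 : Nat.card {p : F × F // W.Equation p.1 p.2} ≤ 24 := by
        have hL2 := aux_L2 h2 h16 W.a₂ W.a₃ W.a₄ W.a₆ ha3
        have hcongr : Nat.card {p : F × F // W.Equation p.1 p.2}
            = Nat.card {p : F × F // p.2 ^ 2 + 0 * p.1 * p.2 + W.a₃ * p.2
              = p.1 ^ 3 + W.a₂ * p.1 ^ 2 + W.a₄ * p.1 + W.a₆} :=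
          Nat.card_congr (Equiv.subtypeEquivRight (fun p => by
            rw [W.equation_iff, ha1]))
        rw [hcongr]
        exact hL2
      omega
    · have hdvd2 : 2 ∣ Nat.card W.Point := aux_order_two h2 W ha1
      have hcop : Nat.Coprime 2 (m * n) := Nat.coprime_two_left.mpr hodd
      have hdvd54 : 2 * (m * n) ∣ Nat.card W.Point :=
        Nat.Coprime.mul_dvd_of_dvd_of_dvd hcop hdvd2 hdvd
      have h54 : 54 ≤ Nat.card W.Point := Nat.le_of_dvd (by omega) hdvd54 |>.trans'
        (by omega)
      omega
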